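/- arXiv:math/9908108 — 2 statements merged into one kernel-verified Lean document; each statement's English description precedes it below -/
import Mathlib

section
/- Let V be a vertex operator algebra and W a weak V-module. For z ∈ ℂ^×, let D_{P(z)}(W) ⊆ W* be the space of functionals α such that for each v ∈ V some (x-z)^k Y*(v,x)α lies in W*((x)), and let D(W) ⊆ W* be the space of α with Y*(v,x)α ∈ W*((x)) for all v. Then ⋂_{z ∈ ℂ^×} D_{P(z)}(W) = D(W). -/
/-- The generalized binomial coefficient `C(m,i) = m(m-1)⋯(m-i+1)/i!` for `m : ℤ`. -/
noncomputable def gbinom (m : ℤ) (i : ℕ) : ℂ :=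
  (∏ j ∈ Finset.range i, ((m : ℂ) - j)) / (Nat.factorial i : ℂ)

/-- A vertex (operator) algebra structure on a complex vector space `V`, recorded in
terms of the modes `Y v n = vₙ` of the vertex operators `Y(v,x) = ∑ₙ vₙ x^{-n-1}`,
together with the vacuum vector and the Virasoro (conformal) vector.  The Jacobi
identity is recorded in its equivalent component (Borcherds identity) form; all the
sums appearing are finitely supported by the truncation condition, and are taken as
`finsum`s. -/
structure VertexAlgebra (V : Type*) [AddCommGroup V] [Module ℂ V] where
  /-- the mode `vₙ` of `Y(v,x)` -/
  Y : V → ℤ → V → V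
  /-- the vacuum vector `𝟙` -/
  vac : V
  /-- the Virasoro (conformal) vector `ω`; `L(n) = ω_{n+1}` -/
  omega : V
  lin_left : ∀ (n : ℤ) (w : V), IsLinearMap ℂ fun v => Y v n w
  lin_right : ∀ (v : V) (n : ℤ), IsLinearMap ℂ (Y v n)
  /-- truncation: `uₙ v = 0` for `n` sufficiently large -/
  trunc : ∀ u v : V, ∃ N : ℤ, ∀ n ≥ N, Y u n v = 0
  /-- the vacuum property `Y(𝟙,x) = 1` -/
  vacuum : ∀ (v : V) (n : ℤ), Y vac n v = if n = -1 then v else 0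
  /-- the creation property `Y(v,x)𝟙 ∈ V[[x]]`, `lim_{x→0} Y(v,x)𝟙 = v` -/
  creation_nonneg : ∀ (v : V) (n : ℤ), 0 ≤ n → Y v n vac = 0
  creation : ∀ v : V, Y v (-1) vac = v
  /-- the Jacobi identity, in component (Borcherds identity) form -/
  borcherds : ∀ (u v w : V) (m n k : ℤ),
    ∑ᶠ i : ℕ, gbinom m i • Y (Y u (k + i) v) (m + n - i) w
      = ∑ᶠ i : ℕ, ((-1 : ℂ) ^ i * gbinom k i) •
          (Y u (m + k - i) (Y v (n + i) w)
            - ((-1 : ℂ) ^ k • Y v (n + k - i) (Y u (m + i) w)))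

/-- A weak module for a vertex algebra: a complex vector space with mode actions
`act v n`, satisfying truncation, the vacuum property and the Jacobi identity
(in component form), but with no grading assumptions. -/
structure WeakModule {V : Type*} [AddCommGroup V] [Module ℂ V]
    (A : VertexAlgebra V) (W : Type*) [AddCommGroup W] [Module ℂ W] where
  act : V → ℤ → W → W
  lin_left : ∀ (n : ℤ) (w : W), IsLinearMap ℂ fun v => act v n w
  lin_right : ∀ (v : V) (n : ℤ), IsLinearMap ℂ (act v n)
  trunc : ∀ (v : V) (w : W), ∃ N : ℤ, ∀ n ≥ N, act v n w = 0
  vacuum : ∀ (w : W) (n : ℤ), act A.vac n w = if n = -1 then w else 0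
  borcherds : ∀ (u v : V) (w : W) (m n k : ℤ),
    ∑ᶠ i : ℕ, gbinom m i • act (A.Y u (k + i) v) (m + n - i) w
      = ∑ᶠ i : ℕ, ((-1 : ℂ) ^ i * gbinom k i) •
          (act u (m + k - i) (act v (n + i) w)
            - ((-1 : ℂ) ^ k • act v (n + k - i) (act u (m + i) w)))

variable {V W : Type*} [AddCommGroup V] [Module ℂ V] [AddCommGroup W] [Module ℂ W]

/-- The space `𝒟_{P(z)}(W) ⊆ W*`: functionals `α` such that for every `v ∈ V` there is
`k ∈ ℕ` with `(x-z)^k Y*(v,x)α ∈ W*((x))`; the coefficient of `x^{-n-1}` of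
`(x-z)^k Y*(v,x)α` is `∑_{i=0}^{k} C(k,i)(-z)^i v*_{n+k-i}α`, and membership in
`W*((x))` means these vanish for `n` sufficiently large. -/
def DPz (star : V → ℤ → (W → ℂ) → (W → ℂ)) (z : ℂ) : Set (W → ℂ) :=
  {α | ∀ v : V, ∃ k : ℕ, ∃ N : ℤ, ∀ n ≥ N,
    (∑ i ∈ Finset.range (k + 1),
      ((k.choose i : ℂ) * (-z) ^ i) • star v (n + k - i) α) = 0}

/-- The space `D(W) ⊆ W*`: functionals `α` with `Y*(v,x)α ∈ W*((x))` for all `v`. -/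
def DW (star : V → ℤ → (W → ℂ) → (W → ℂ)) : Set (W → ℂ) :=
  {α | ∀ v : V, ∃ N : ℤ, ∀ n ≥ N, star v n α = 0}

open Polynomial

noncomputable def shiftEnd : Module.End ℂ (ℤ → ℂ) where
  toFun f n := f (n + 1)
  map_add' f g := rfl
  map_smul' c f := rfl

lemma shiftEnd_pow (j : ℕ) (f : ℤ → ℂ) (n : ℤ) :
    ((shiftEnd ^ j) f) n = f (n + j) := by
  induction j generalizing f n with
  | zero => simp
  | succ j ih =>
    rw [pow_succ]
    show ((shiftEnd ^ j) (shiftEnd f)) n = _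
    rw [ih]
    show f (n + j + 1) = _
    congr 1; push_cast; ring

lemma aeval_shift_apply (p : Polynomial ℂ) (f : ℤ → ℂ) (n : ℤ) :
    (aeval shiftEnd p f) n
      = ∑ j ∈ Finset.range (p.natDegree + 1), p.coeff j * f (n + j) := by
  rw [Polynomial.aeval_eq_sum_range]
  rw [LinearMap.coe_sum, Finset.sum_apply, Finset.sum_apply]
  refine Finset.sum_congr rfl fun j _ => ?_
  rw [LinearMap.smul_apply, Pi.smul_apply, shiftEnd_pow, smul_eq_mul]

lemma aeval_shift_eventually_zero (p : Polynomial ℂ) (g : ℤ → ℂ) (N : ℤ)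
    (hg : ∀ m ≥ N, g m = 0) : ∀ n ≥ N, (aeval shiftEnd p g) n = 0 := by
  intro n hn
  rw [aeval_shift_apply]
  refine Finset.sum_eq_zero fun j _ => ?_
  rw [hg (n + j) (by omega), mul_zero]

lemma aeval_shift_X_sub_C_pow (z : ℂ) (k : ℕ) (f : ℤ → ℂ) (n : ℤ) :
    (aeval shiftEnd ((X - C z) ^ k) f) n
      = ∑ i ∈ Finset.range (k + 1), ((k.choose i : ℂ) * (-z) ^ i) * f (n + k - i) := by
  have hpoly : (X - C z) ^ k
      = ∑ i ∈ Finset.range (k + 1), C ((k.choose i : ℂ) * (-z) ^ (k - i)) * X ^ i := by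
    rw [sub_eq_add_neg, ← C_neg, add_pow]
    refine Finset.sum_congr rfl fun i _ => ?_
    rw [← C_pow, show ((k.choose i : ℕ) : ℂ[X]) = C (k.choose i : ℂ) by simp,
      mul_assoc, ← C_mul, mul_comm ((-z) ^ (k - i)), mul_comm (X ^ i)]
  rw [hpoly, map_sum, LinearMap.coe_sum, Finset.sum_apply, Finset.sum_apply]
  rw [← Finset.sum_range_reflect]
  refine Finset.sum_congr rfl fun i hi => ?_
  rw [Finset.mem_range] at hi
  have hik : i ≤ k := by omega
  have h1 : k + 1 - 1 - i = k - i := by omega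
  rw [h1]
  have h2 : k - (k - i) = i := by omega
  rw [map_mul, aeval_C, aeval_X_pow, h2, Nat.choose_symm hik, Module.End.mul_apply,
    Module.algebraMap_end_apply, Pi.smul_apply, shiftEnd_pow, smul_eq_mul]
  congr 2
  push_cast [hik]
  ring

theorem stmt15' (A : VertexAlgebra V) (M : WeakModule A W)
    (star : V → ℤ → (W → ℂ) → (W → ℂ)) :
    ⋂ z ∈ {z : ℂ | z ≠ 0}, DPz (W := W) star z = DW star := by
  ext α
  simp only [Set.mem_iInter, Set.mem_setOf_eq, DPz, DW]
  constructor
  · intro h v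
    obtain ⟨k₁, N₁, h₁⟩ := h 1 one_ne_zero v
    obtain ⟨k₂, N₂, h₂⟩ := h 2 two_ne_zero v
    obtain ⟨a, b, hab⟩ :=
      (isCoprime_X_sub_C_of_isUnit_sub (R := ℂ)
        (by norm_num : IsUnit ((1:ℂ) - 2))).pow (m := k₁) (n := k₂)
    refine ⟨max N₁ N₂, fun n hn => ?_⟩
    funext w
    set f : ℤ → ℂ := fun m => star v m α w with hf
    have hg₁ : ∀ m ≥ N₁, (aeval shiftEnd ((X - C (1:ℂ)) ^ k₁) f) m = 0 := by
      intro m hm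
      rw [aeval_shift_X_sub_C_pow]
      have := congrFun (h₁ m hm) w
      simpa [Finset.sum_apply, Pi.smul_apply, smul_eq_mul] using this
    have hg₂ : ∀ m ≥ N₂, (aeval shiftEnd ((X - C (2:ℂ)) ^ k₂) f) m = 0 := by
      intro m hm
      rw [aeval_shift_X_sub_C_pow]
      have := congrFun (h₂ m hm) w
      simpa [Finset.sum_apply, Pi.smul_apply, smul_eq_mul] using this
    have e1 := aeval_shift_eventually_zero a _ N₁ hg₁ n
      (le_trans (le_max_left _ _) hn)
    have e2 := aeval_shift_eventually_zero b _ N₂ hg₂ n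
      (le_trans (le_max_right _ _) hn)
    have key : f n = 0 := by
      calc f n = (aeval shiftEnd (1 : ℂ[X]) f) n := by simp
        _ = (aeval shiftEnd (a * (X - C 1) ^ k₁ + b * (X - C 2) ^ k₂) f) n := by
            rw [hab]
        _ = (aeval shiftEnd a) ((aeval shiftEnd ((X - C (1:ℂ)) ^ k₁)) f) n
            + (aeval shiftEnd b) ((aeval shiftEnd ((X - C (2:ℂ)) ^ k₂)) f) n := by
            rw [map_add, map_mul, map_mul, LinearMap.add_apply, Pi.add_apply,
              Module.End.mul_apply, Module.End.mul_apply]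
        _ = 0 := by rw [e1, e2, add_zero]
    exact key
  · intro h z _ v
    obtain ⟨N, hN⟩ := h v
    refine ⟨0, N, fun n hn => ?_⟩
    have := hN n hn
    simpa using this


/-- for a vertex operator algebra `V`, a weak `V`-module `W`, and the
modes `star v n = v*ₙ` of the dual vertex operators `Y*(v,x)` on `W*`,
`⋂_{z ∈ ℂˣ} 𝒟_{P(z)}(W) = D(W)`. -/

theorem stmt15 (A : VertexAlgebra V) (M : WeakModule A W)
    (star : V → ℤ → (W → ℂ) → (W → ℂ)) :
    ⋂ z ∈ {z : ℂ | z ≠ 0}, DPz (W := W) star z = DW star := by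
  exact stmt15' A M star
end

section
/- Let V₁, V₂ be vertex operator algebras, W a weak V₁⊗V₂-module, and W₂ a finitely generated weak V₂-module (V₂ acting via 1⊗V₂ on W). Then Hom_{V₂}(W₂, W) is a weak V₁-module under (Y(v₁,x)f)(w₂) := Y(v₁⊗1, x)(f(w₂)); in particular, the truncation condition holds: for each v₁ ∈ V₁ and f ∈ Hom_{V₂}(W₂,W), there is r ∈ ℕ with x^r (Y(v₁,x)f)(w₂) ∈ W[[x]] for all w₂ ∈ W₂. -/
/-- let `V₁, V₂` be vertex operator algebras and let `W` be a weak
`V₁ ⊗ V₂`-module, i.e. `W` carries commuting weak `V₁`- and `V₂`-module structures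
(`V₁` and `V₂` act through `V₁ ⊗ 𝟙` and `𝟙 ⊗ V₂`).  Let `W₂` be a weak `V₂`-module
generated by a finite-dimensional subspace `P` under the modes of `V₂`.  Then
`Hom_{V₂}(W₂, W)` is a weak `V₁`-module under `(Y(v₁,x)f)(w₂) := Y(v₁⊗𝟙,x)(f(w₂))`;
in particular the truncation condition holds: for each `v₁` and each `V₂`-homomorphism
`f`, there is `r` with `x^r (Y(v₁,x)f)(w₂) ∈ W[[x]]` for all `w₂ ∈ W₂`, i.e. the modes
`(v₁)ₙ ∘ f` vanish for all `n ≥ r` uniformly in `w₂`; and each mode of `Y(v₁,x)f` is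
again a `V₂`-homomorphism. -/
theorem stmt17 {V₁ V₂ W₂ W : Type*}
    [AddCommGroup V₁] [Module ℂ V₁] [AddCommGroup V₂] [Module ℂ V₂]
    [AddCommGroup W₂] [Module ℂ W₂] [AddCommGroup W] [Module ℂ W]
    (A₁ : VertexAlgebra V₁) (A₂ : VertexAlgebra V₂)
    (M₂ : WeakModule A₂ W₂) (N₁ : WeakModule A₁ W) (N₂ : WeakModule A₂ W)
    (hcommute : ∀ (v₁ : V₁) (v₂ : V₂) (m n : ℤ) (w : W),
      N₁.act v₁ m (N₂.act v₂ n w) = N₂.act v₂ n (N₁.act v₁ m w))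
    (P : Submodule ℂ W₂) (hPfin : FiniteDimensional ℂ P)
    (hPgen : ∀ S : Submodule ℂ W₂, P ≤ S →
      (∀ (v : V₂) (n : ℤ), ∀ w ∈ S, M₂.act v n w ∈ S) → S = ⊤)
    (f : W₂ →ₗ[ℂ] W)
    (hf : ∀ (v : V₂) (n : ℤ) (w₂ : W₂), f (M₂.act v n w₂) = N₂.act v n (f w₂))
    (v₁ : V₁) :
    (∃ r : ℤ, ∀ n ≥ r, ∀ w₂ : W₂, N₁.act v₁ n (f w₂) = 0) ∧
    (∀ (n : ℤ) (v : V₂) (n' : ℤ) (w₂ : W₂),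
      N₁.act v₁ n (f (M₂.act v n' w₂)) = N₂.act v n' (N₁.act v₁ n (f w₂))) := by
  constructor
  · -- truncation, uniform in w₂
    have hfg : P.FG := (Submodule.fg_iff_finiteDimensional P).mpr hPfin
    obtain ⟨s, hs⟩ := hfg
    classical
    set g : W₂ → ℤ := fun w => Classical.choose (N₁.trunc v₁ (f w)) with hg
    have hgspec : ∀ w : W₂, ∀ n ≥ g w, N₁.act v₁ n (f w) = 0 :=
      fun w => Classical.choose_spec (N₁.trunc v₁ (f w))
    set r : ℤ := ((s.sup fun w => (g w).toNat : ℕ) : ℤ) with hr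
    have hrle : ∀ w ∈ s, g w ≤ r := by
      intro w hw
      calc g w ≤ ((g w).toNat : ℤ) := Int.self_le_toNat _
        _ ≤ r := by rw [hr]; exact_mod_cast Finset.le_sup (f := fun w => (g w).toNat) hw
    set S : Submodule ℂ W₂ :=
      { carrier := {w | ∀ n ≥ r, N₁.act v₁ n (f w) = 0}
        zero_mem' := by
          intro n hn
          rw [map_zero]
          exact (N₁.lin_right v₁ n).map_zero
        add_mem' := by
          intro a b ha hb n hn
          rw [map_add, (N₁.lin_right v₁ n).map_add, ha n hn, hb n hn, add_zero]
        smul_mem' := by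
          intro c a ha n hn
          rw [map_smul, (N₁.lin_right v₁ n).map_smul, ha n hn, smul_zero] } with hS
    have hPS : P ≤ S := by
      rw [← hs, Submodule.span_le]
      intro w hw n hn
      exact hgspec w n (le_trans (hrle w hw) hn)
    have hclosed : ∀ (v : V₂) (n : ℤ), ∀ w ∈ S, M₂.act v n w ∈ S := by
      intro v n w hw m hm
      have : N₁.act v₁ m (f (M₂.act v n w)) = N₂.act v n (N₁.act v₁ m (f w)) := by
        rw [hf, hcommute]
      rw [this, hw m hm]
      exact (N₂.lin_right v n).map_zero
    have hST : S = ⊤ := hPgen S hPS hclosed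
    refine ⟨r, fun n hn w₂ => ?_⟩
    have hw : w₂ ∈ S := hST ▸ Submodule.mem_top
    exact hw n hn
  · intro n v n' w₂
    rw [hf, hcommute]
end
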